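/- Let $\mathcal{D} \in \mathbb{C}^{ns\times ns}$ be block diagonal with invertible $s\times s$ diagonal blocks, $\mathcal{U} \in \mathbb{C}^{ns\times ns}$ block upper triangular with identity diagonal blocks, and $\mathcal{C}$ a block companion matrix (identity blocks on the first block subdiagonal, last block column arbitrary, zeros elsewhere). Then $\mathcal{H} = \mathcal{D}\mathcal{U}\mathcal{C}\mathcal{U}^{-1}\mathcal{D}^{-1}$ is block upper Hessenberg, and its subdiagonal blocks are $H_{k+1,k} = D_{k+1} D_k^{-1}$, where $D_k$ is the $k$-th diagonal block of $\mathcal{D}$. In particular, if each $D_k$ is upper triangular with positive diagonal entries, then so is each $H_{k+1,k}$. -/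

import Mathlib

open Matrix

/-- Block companion matrix with `s×s` blocks, indexed by `Fin n × Fin s`. -/
def blockCompanion (n s : ℕ) (C : Fin n → Matrix (Fin s) (Fin s) ℂ) :
    Matrix (Fin n × Fin s) (Fin n × Fin s) ℂ :=
  fun p q =>
    (if (p.1 : ℕ) = (q.1 : ℕ) + 1 ∧ p.2 = q.2 then 1 else 0) +
      (if (q.1 : ℕ) = n - 1 then C p.1 p.2 q.2 else 0)

/-- Upper triangular with positive (real) diagonal entries. -/
def UpperTriPosDiag {s : ℕ} (M : Matrix (Fin s) (Fin s) ℂ) : Prop :=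
  (∀ i j : Fin s, (j : ℕ) < (i : ℕ) → M i j = 0) ∧
    ∀ i : Fin s, 0 < (M i i).re ∧ (M i i).im = 0

namespace DUCAux

open Finset

variable {n s : ℕ}

/-- strictly block upper triangular -/
def SBU (M : Matrix (Fin n × Fin s) (Fin n × Fin s) ℂ) : Prop :=
  ∀ p q : Fin n × Fin s, ¬ ((p.1 : ℕ) < (q.1 : ℕ)) → M p q = 0

lemma SBU_pow_zero {M : Matrix (Fin n × Fin s) (Fin n × Fin s) ℂ}
    (hM : SBU M) : ∀ k (p q : Fin n × Fin s), ((q.1 : ℕ) < (p.1 : ℕ) + k) →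
      (M ^ k) p q = 0 := by
  intro k
  induction k with
  | zero =>
    intro p q h
    rw [pow_zero, one_apply_ne]
    intro e; rw [e] at h; omega
  | succ k ih =>
    intro p q h
    rw [pow_succ, mul_apply]
    refine Finset.sum_eq_zero fun r _ => ?_
    by_cases h1 : (r.1 : ℕ) < (p.1 : ℕ) + k
    · rw [ih p r h1, zero_mul]
    · rw [hM r q (by omega), mul_zero]

lemma unipotent_inverse (U : Matrix (Fin n × Fin s) (Fin n × Fin s) ℂ)
    (hUtri : ∀ p q : Fin n × Fin s, (q.1 : ℕ) < (p.1 : ℕ) → U p q = 0)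
    (hUdiag : ∀ (i : Fin n) (a b : Fin s), U (i, a) (i, b) = if a = b then 1 else 0) :
    ∃ V : Matrix (Fin n × Fin s) (Fin n × Fin s) ℂ, U * V = 1 ∧
      (∀ p q : Fin n × Fin s, (q.1 : ℕ) < (p.1 : ℕ) → V p q = 0) ∧
      (∀ (i : Fin n) (a b : Fin s), V (i, a) (i, b) = if a = b then 1 else 0) := by
  have hSBU : SBU (-(U - 1)) := by
    rintro ⟨i, a⟩ ⟨j, b⟩ h
    simp only [Matrix.neg_apply, Matrix.sub_apply, neg_eq_zero]
    rcases lt_or_eq_of_le (not_lt.mp h) with hlt | heq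
    · rw [hUtri _ _ hlt, one_apply_ne, sub_zero]
      intro e
      rw [e] at hlt; omega
    · have : j = i := Fin.ext heq
      subst this
      rw [hUdiag, one_apply]
      simp [Prod.ext_iff]
  set M := -(U - 1) with hMdef
  refine ⟨∑ k ∈ range n, M ^ k, ?_, ?_, ?_⟩
  · have hMn : M ^ n = 0 := by
      ext p q
      exact SBU_pow_zero hSBU n p q (by have := q.1.isLt; omega)
    have key : (M - 1) * ∑ k ∈ range n, M ^ k = M ^ n - 1 := mul_geom_sum M n
    have hU : U = -(M - 1) := by rw [hMdef]; abel
    rw [hU, neg_mul, key, hMn, zero_sub, neg_neg]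
  · intro p q h
    rw [Matrix.sum_apply]
    exact Finset.sum_eq_zero fun k _ => SBU_pow_zero hSBU k p q (by omega)
  · intro i a b
    rw [Matrix.sum_apply]
    rw [Finset.sum_eq_single_of_mem 0 (mem_range.mpr i.pos)
      (fun k _ hk => SBU_pow_zero hSBU k (i, a) (i, b)
        (show (i : ℕ) < (i : ℕ) + k by omega))]
    rw [pow_zero, one_apply]
    simp [Prod.ext_iff]

lemma blockdiag_inv (Dblk : Fin n → Matrix (Fin s) (Fin s) ℂ)
    (hDblk : ∀ i, IsUnit (Dblk i))
    (D : Matrix (Fin n × Fin s) (Fin n × Fin s) ℂ)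
    (hD : D = fun p q => if p.1 = q.1 then Dblk p.1 p.2 q.2 else 0) :
    D⁻¹ = fun p q => if p.1 = q.1 then (Dblk p.1)⁻¹ p.2 q.2 else 0 := by
  apply Matrix.inv_eq_right_inv
  ext ⟨i, a⟩ ⟨j, b⟩
  erw [mul_apply, Fintype.sum_prod_type]
  rw [hD]
  simp only
  rw [Finset.sum_eq_single_of_mem i (mem_univ i)
    (fun u _ hu => Finset.sum_eq_zero fun c _ => by rw [if_neg (Ne.symm hu), zero_mul])]
  by_cases hij : i = j
  · subst hij
    simp only [if_pos rfl, if_true, ite_true]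
    have : ∑ c, Dblk i a c * (Dblk i)⁻¹ c b = (Dblk i * (Dblk i)⁻¹) a b :=
      (mul_apply).symm
    rw [this, Matrix.mul_nonsing_inv _ ((Matrix.isUnit_iff_isUnit_det _).mp (hDblk i))]
    rw [one_apply, one_apply]
    simp [Prod.ext_iff]
  · simp only [if_neg hij, mul_zero, Finset.sum_const_zero]
    rw [one_apply_ne (by simp [Prod.ext_iff, hij])]

lemma utpd_diag_ne_zero {M : Matrix (Fin s) (Fin s) ℂ} (h : UpperTriPosDiag M)
    (i : Fin s) : M i i ≠ 0 := by
  intro h0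
  have := (h.2 i).1
  rw [h0] at this
  simp at this

lemma utpd_blockTriangular {M : Matrix (Fin s) (Fin s) ℂ} (h : UpperTriPosDiag M) :
    M.BlockTriangular id := by
  intro i j hij
  exact h.1 i j (by exact hij)

lemma utpd_det_isUnit {M : Matrix (Fin s) (Fin s) ℂ} (h : UpperTriPosDiag M) :
    IsUnit M.det := by
  rw [isUnit_iff_ne_zero, Matrix.det_of_upperTriangular (utpd_blockTriangular h)]
  exact Finset.prod_ne_zero_iff.mpr fun i _ => utpd_diag_ne_zero h i

lemma utpd_mul {A B : Matrix (Fin s) (Fin s) ℂ}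
    (hA : UpperTriPosDiag A) (hB : UpperTriPosDiag B) : UpperTriPosDiag (A * B) := by
  have hdiag : ∀ i : Fin s, (A * B) i i = A i i * B i i := by
    intro i
    rw [mul_apply]
    refine Finset.sum_eq_single i (fun r _ hr => ?_) (fun h => absurd (mem_univ i) h)
    rcases lt_or_gt_of_ne (fun e : (r : ℕ) = (i : ℕ) => hr (Fin.ext e)) with hlt | hgt
    · rw [hA.1 i r hlt, zero_mul]
    · rw [hB.1 r i hgt, mul_zero]
  constructor
  · intro i j hij
    rw [mul_apply]
    refine Finset.sum_eq_zero fun r _ => ?_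
    by_cases hr : (r : ℕ) < (i : ℕ)
    · rw [hA.1 i r hr, zero_mul]
    · rw [hB.1 r j (by omega), mul_zero]
  · intro i
    rw [hdiag i]
    obtain ⟨hare, haim⟩ := hA.2 i
    obtain ⟨hbre, hbim⟩ := hB.2 i
    constructor
    · rw [Complex.mul_re, haim, hbim]
      simpa using mul_pos hare hbre
    · rw [Complex.mul_im, haim, hbim]
      ring

lemma utpd_inv {A : Matrix (Fin s) (Fin s) ℂ}
    (hA : UpperTriPosDiag A) : UpperTriPosDiag A⁻¹ := by
  have hdet := utpd_det_isUnit hA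
  obtain ⟨inst⟩ := ((Matrix.isUnit_iff_isUnit_det A).mpr hdet).nonempty_invertible
  have htri : A⁻¹.BlockTriangular id :=
    Matrix.blockTriangular_inv_of_blockTriangular (utpd_blockTriangular hA)
  have htri' : ∀ i j : Fin s, (j : ℕ) < (i : ℕ) → A⁻¹ i j = 0 := by
    intro i j hij
    exact htri (show (id j : Fin s) < id i from hij)
  have hdiag : ∀ i : Fin s, A i i * A⁻¹ i i = 1 := by
    intro i
    have h1 : (A * A⁻¹) i i = 1 := by
      rw [Matrix.mul_nonsing_inv A hdet, one_apply_eq]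
    rw [mul_apply] at h1
    have hsum : ∑ r, A i r * A⁻¹ r i = A i i * A⁻¹ i i := by
      refine Finset.sum_eq_single i (fun r _ hr => ?_) (fun h => absurd (mem_univ i) h)
      rcases lt_or_gt_of_ne (fun e : (r : ℕ) = (i : ℕ) => hr (Fin.ext e)) with hlt | hgt
      · rw [hA.1 i r hlt, zero_mul]
      · rw [htri' r i hgt, mul_zero]
    rw [← hsum]
    exact h1
  refine ⟨htri', fun i => ?_⟩
  have hinv : (A i i)⁻¹ = A⁻¹ i i := inv_eq_of_mul_eq_one_right (hdiag i)
  obtain ⟨hre, him⟩ := hA.2 i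
  rw [← hinv]
  constructor
  · rw [Complex.inv_re]
    apply div_pos hre
    exact Complex.normSq_pos.mpr (utpd_diag_ne_zero hA i)
  · rw [Complex.inv_im, him]
    simp

end DUCAux

open DUCAux Finset

theorem DUC_block_hessenberg {n s : ℕ}
    (Dblk : Fin n → Matrix (Fin s) (Fin s) ℂ)
    (hDblk : ∀ i, IsUnit (Dblk i))
    (D : Matrix (Fin n × Fin s) (Fin n × Fin s) ℂ)
    (hD : D = fun p q => if p.1 = q.1 then Dblk p.1 p.2 q.2 else 0)
    (U : Matrix (Fin n × Fin s) (Fin n × Fin s) ℂ)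
    (hUtri : ∀ p q : Fin n × Fin s, (q.1 : ℕ) < (p.1 : ℕ) → U p q = 0)
    (hUdiag : ∀ (i : Fin n) (a b : Fin s),
      U (i, a) (i, b) = if a = b then 1 else 0)
    (C : Fin n → Matrix (Fin s) (Fin s) ℂ)
    (H : Matrix (Fin n × Fin s) (Fin n × Fin s) ℂ)
    (hH : H = D * U * blockCompanion n s C * U⁻¹ * D⁻¹) :
    (∀ p q : Fin n × Fin s, (q.1 : ℕ) + 1 < (p.1 : ℕ) → H p q = 0) ∧
      (∀ (k : Fin n) (hk : (k : ℕ) + 1 < n) (a b : Fin s),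
        H (⟨(k : ℕ) + 1, hk⟩, a) (k, b) =
          (Dblk ⟨(k : ℕ) + 1, hk⟩ * (Dblk k)⁻¹) a b) ∧
      ((∀ i, UpperTriPosDiag (Dblk i)) →
        ∀ (k : Fin n) (hk : (k : ℕ) + 1 < n),
          UpperTriPosDiag (Dblk ⟨(k : ℕ) + 1, hk⟩ * (Dblk k)⁻¹)) := by
  obtain ⟨V, hUV, hVtri, hVdiag⟩ := unipotent_inverse U hUtri hUdiag
  have hUinv : U⁻¹ = V := Matrix.inv_eq_right_inv hUV
  have hDinv := blockdiag_inv Dblk hDblk D hD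
  have hDapp : ∀ p q : Fin n × Fin s,
      D p q = if p.1 = q.1 then Dblk p.1 p.2 q.2 else 0 := by
    intro p q; rw [hD]
  have hEapp : ∀ p q : Fin n × Fin s,
      D⁻¹ p q = if p.1 = q.1 then (Dblk p.1)⁻¹ p.2 q.2 else 0 := by
    intro p q; rw [hDinv]
  set A := U * blockCompanion n s C * V with hAdef
  have hHA : H = D * A * D⁻¹ := by
    rw [hH, hUinv, hAdef]
    simp only [Matrix.mul_assoc]
  -- A vanishes strictly below the first block subdiagonal
  have hA0 : ∀ p q : Fin n × Fin s, (q.1 : ℕ) + 1 < (p.1 : ℕ) → A p q = 0 := by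
    intro p q h
    rw [hAdef, mul_apply]
    refine Finset.sum_eq_zero fun u _ => ?_
    by_cases hu : (q.1 : ℕ) < (u.1 : ℕ)
    · rw [hVtri u q hu, mul_zero]
    · have hUC : (U * blockCompanion n s C) p u = 0 := by
        rw [mul_apply]
        refine Finset.sum_eq_zero fun t _ => ?_
        by_cases ht : (t.1 : ℕ) < (p.1 : ℕ)
        · rw [hUtri p t ht, zero_mul]
        · have hp := p.1.isLt
          have hc : blockCompanion n s C t u = 0 := by
            unfold blockCompanion
            rw [if_neg (by rintro ⟨e, -⟩; omega), if_neg (by omega), add_zero]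
          rw [hc, mul_zero]
      rw [hUC, zero_mul]
  -- A has identity blocks on the first block subdiagonal
  have hA1 : ∀ (k : Fin n) (hk : (k : ℕ) + 1 < n) (a b : Fin s),
      A (⟨(k : ℕ) + 1, hk⟩, a) (k, b) = if a = b then 1 else 0 := by
    intro k hk a b
    have hkn : (k : ℕ) < n - 1 := by omega
    rw [hAdef, mul_apply]
    rw [Finset.sum_eq_single_of_mem ((k, b) : Fin n × Fin s) (mem_univ _) ?side]
    case side =>
      intro u _ hu
      by_cases h1 : (k : ℕ) < (u.1 : ℕ)
      · rw [hVtri u (k, b) h1, mul_zero]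
      · by_cases h2 : (u.1 : ℕ) = (k : ℕ)
        · obtain ⟨u1, u2⟩ := u
          have hu1 : u1 = k := Fin.ext h2
          subst hu1
          have hV0 : V (u1, u2) (u1, b) = 0 := by
            rw [hVdiag, if_neg (fun e => hu (by rw [e]))]
          rw [hV0, mul_zero]
        · have hUC : (U * blockCompanion n s C) (⟨(k : ℕ) + 1, hk⟩, a) u = 0 := by
            rw [mul_apply]
            refine Finset.sum_eq_zero fun t _ => ?_
            by_cases ht : (t.1 : ℕ) < (k : ℕ) + 1
            · rw [hUtri (⟨(k : ℕ) + 1, hk⟩, a) t ht, zero_mul]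
            · have hc : blockCompanion n s C t u = 0 := by
                unfold blockCompanion
                rw [if_neg (by rintro ⟨e, -⟩; omega), if_neg (by omega), add_zero]
              rw [hc, mul_zero]
          rw [hUC, zero_mul]
    rw [hVdiag, if_pos rfl, mul_one, mul_apply]
    rw [Finset.sum_eq_single_of_mem ((⟨(k : ℕ) + 1, hk⟩, b) : Fin n × Fin s)
      (mem_univ _) ?side2]
    case side2 =>
      intro t _ ht
      by_cases h1 : (t.1 : ℕ) < (k : ℕ) + 1
      · rw [hUtri (⟨(k : ℕ) + 1, hk⟩, a) t h1, zero_mul]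
      · have hc : blockCompanion n s C t (k, b) = 0 := by
          unfold blockCompanion
          rw [if_neg ?hcond, if_neg (show ¬((k : ℕ) = n - 1) by omega), add_zero]
          rintro ⟨e1, e2⟩
          exact ht (Prod.ext (Fin.ext e1) e2)
        rw [hc, mul_zero]
    rw [hUdiag]
    have hc1 : blockCompanion n s C (⟨(k : ℕ) + 1, hk⟩, b) (k, b) = 1 := by
      unfold blockCompanion
      rw [if_pos ⟨rfl, rfl⟩, if_neg (show ¬((k : ℕ) = n - 1) by omega), add_zero]
    rw [hc1, mul_one]
  refine ⟨?_, ?_, ?_⟩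
  · -- block Hessenberg
    intro p q h
    rw [hHA, mul_apply]
    refine Finset.sum_eq_zero fun u _ => ?_
    by_cases hu : u.1 = q.1
    · have hDA : (D * A) p u = 0 := by
        rw [mul_apply]
        refine Finset.sum_eq_zero fun t _ => ?_
        by_cases ht : p.1 = t.1
        · have h1 : (u.1 : ℕ) = (q.1 : ℕ) := by rw [hu]
          have h2 : (p.1 : ℕ) = (t.1 : ℕ) := by rw [ht]
          rw [hA0 t u (by omega), mul_zero]
        · rw [hDapp, if_neg ht, zero_mul]
      rw [hDA, zero_mul]
    · rw [hEapp, if_neg hu, mul_zero]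
  · -- subdiagonal blocks
    intro k hk a b
    rw [hHA, mul_apply, Fintype.sum_prod_type]
    rw [Finset.sum_eq_single_of_mem k (mem_univ k) ?jside]
    case jside =>
      intro j _ hj
      refine Finset.sum_eq_zero fun d _ => ?_
      rw [hEapp, if_neg (fun e : j = k => hj e), mul_zero]
    have hDA : ∀ d, (D * A) (⟨(k : ℕ) + 1, hk⟩, a) (k, d)
        = Dblk ⟨(k : ℕ) + 1, hk⟩ a d := by
      intro d
      rw [mul_apply, Fintype.sum_prod_type]
      rw [Finset.sum_eq_single_of_mem (⟨(k : ℕ) + 1, hk⟩ : Fin n) (mem_univ _) ?iside]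
      case iside =>
        intro i _ hi
        refine Finset.sum_eq_zero fun c _ => ?_
        rw [hDapp, if_neg (fun e : (⟨(k : ℕ) + 1, hk⟩ : Fin n) = i => hi e.symm),
          zero_mul]
      have : ∀ c, D ((⟨(k : ℕ) + 1, hk⟩ : Fin n), a) (⟨(k : ℕ) + 1, hk⟩, c)
          = Dblk ⟨(k : ℕ) + 1, hk⟩ a c := by
        intro c
        rw [hDapp, if_pos rfl]
      simp only [this, hA1 k hk, mul_ite, mul_one, mul_zero]
      simp [Finset.sum_ite_eq']
    simp only [hDA]
    have hE : ∀ d, (D⁻¹) ((k, d) : Fin n × Fin s) (k, b) = (Dblk k)⁻¹ d b := by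
      intro d
      rw [hEapp, if_pos rfl]
    simp only [hE]
    rw [Matrix.mul_apply]
  · -- positivity
    intro hAll k hk
    exact utpd_mul (hAll _) (utpd_inv (hAll k))
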